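/- arXiv:1904.09560 — 5 statements merged into one kernel-verified Lean document; each statement's English description precedes it below -/
import Mathlib

section
/- Fix an integer k ≥ 3 and a prime p ≥ 3. Then for any positive integer n, the size of any k-colored sum-free set in 𝔽_p^n is at most Γ_{p,k}^n. -/
/-- `Γ_{p,k} = inf_{0<t<1} (1 + t + ⋯ + t^{p-1}) / t^{(p-1)/k}`. -/
noncomputable def GammaPK (p k : ℕ) : ℝ :=
  sInf ((fun t : ℝ => (∑ i ∈ Finset.range p, t ^ i) / t ^ (((p : ℝ) - 1) / k)) '' Set.Ioo 0 1)

open Finset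

set_option linter.unusedSectionVars false
set_option maxHeartbeats 2000000

section Diag
variable {F : Type} [Field F] [Fintype F] [DecidableEq F]

def PhiMap {ι α : Type} [Fintype ι] (F : Type) [Field F] (f : α → ι → F) :
    (ι → F) →ₗ[F] (α → F) where
  toFun h a := ∑ i, f a i * h i
  map_add' h1 h2 := by funext a; simp [mul_add, Finset.sum_add_distrib]
  map_smul' r h := by funext a; simp [Finset.mul_sum, mul_left_comm]

lemma mem_ker_PhiMap {ι α : Type} [Fintype ι] (f : α → ι → F) (h : ι → F) :
    h ∈ LinearMap.ker (PhiMap F f) ↔ ∀ a, ∑ i, f a i * h i = 0 := by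
  rw [LinearMap.mem_ker]
  exact ⟨fun hh a => congrFun hh a, fun hh => funext hh⟩

lemma card_le_card_add_finrank_ker {ι α : Type} [Fintype ι] [Fintype α] (f : α → ι → F) :
    Fintype.card ι ≤ Fintype.card α + Module.finrank F ↥(LinearMap.ker (PhiMap F f)) := by
  have h := LinearMap.finrank_range_add_finrank_ker (PhiMap F f)
  rw [Module.finrank_fintype_fun_eq_card] at h
  have h2 : Module.finrank F ↥(LinearMap.range (PhiMap F f)) ≤ Fintype.card α := by
    have := Submodule.finrank_le (LinearMap.range (PhiMap F f))
    rwa [Module.finrank_fintype_fun_eq_card] at this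
  omega

lemma exists_max_support {ι : Type} [Fintype ι] [DecidableEq ι] (W : Submodule F (ι → F)) :
    ∃ h ∈ W, Module.finrank F ↥W ≤ (Finset.univ.filter fun i => h i ≠ 0).card := by
  classical
  obtain ⟨w₀, -, hw₀⟩ := Finset.exists_max_image (Finset.univ : Finset W)
      (fun w => (Finset.univ.filter fun i => (w : ι → F) i ≠ 0).card) ⟨0, Finset.mem_univ 0⟩
  refine ⟨w₀, w₀.2, ?_⟩
  set T : Finset ι := Finset.univ.filter fun i => (w₀ : ι → F) i ≠ 0 with hT
  let ρ : W →ₗ[F] ({i : ι // i ∈ T} → F) :=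
    { toFun := fun w t => (w : ι → F) t
      map_add' := by intros; rfl
      map_smul' := by intros; rfl }
  have hinj : Function.Injective ρ := by
    rw [← LinearMap.ker_eq_bot, Submodule.eq_bot_iff]
    rintro w hw
    by_contra hne
    have hwT : ∀ i ∈ T, (w : ι → F) i = 0 := fun i hi =>
      congrFun (LinearMap.mem_ker.mp hw) ⟨i, hi⟩
    obtain ⟨i₀, hi₀⟩ : ∃ i, (w : ι → F) i ≠ 0 := by
      by_contra hz; push_neg at hz
      exact hne (Subtype.ext (funext hz))
    have hi₀T : i₀ ∉ T := fun hmem => hi₀ (hwT _ hmem)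
    have hsub : insert i₀ T ⊆ Finset.univ.filter fun i => ((w₀ + w : W) : ι → F) i ≠ 0 := by
      intro i hi
      rcases Finset.mem_insert.mp hi with rfl | hiT
      · simp only [Finset.mem_filter, Finset.mem_univ, true_and]
        have : (w₀ : ι → F) i = 0 := by
          by_contra hc
          exact hi₀T (Finset.mem_filter.mpr ⟨Finset.mem_univ _, hc⟩)
        simp [Submodule.coe_add, Pi.add_apply, this, hi₀]
      · simp only [Finset.mem_filter, Finset.mem_univ, true_and]
        have h1 : (w₀ : ι → F) i ≠ 0 := (Finset.mem_filter.mp hiT).2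
        simp [Submodule.coe_add, Pi.add_apply, hwT i hiT, h1]
    have hle := hw₀ (w₀ + w) (Finset.mem_univ _)
    have hcard : T.card + 1 ≤ (Finset.univ.filter fun i => ((w₀ + w : W) : ι → F) i ≠ 0).card := by
      have := Finset.card_le_card hsub
      rwa [Finset.card_insert_of_notMem hi₀T] at this
    omega
  calc Module.finrank F ↥W ≤ Module.finrank F ({i : ι // i ∈ T} → F) :=
        LinearMap.finrank_le_finrank_of_injective hinj
    _ = T.card := by rw [Module.finrank_fintype_fun_eq_card, Fintype.card_coe]

def extSnoc {ι : Type} {m : ℕ} (T : Finset ι) (i : Fin (m+2) → {x : ι // x ∈ T}) (ℓ : ι) :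
    Fin (m+3) → ι :=
  Fin.snoc (fun j => (i j).val) ℓ

lemma extSnoc_last {ι : Type} {m : ℕ} (T : Finset ι) (i : Fin (m+2) → {x : ι // x ∈ T}) (ℓ : ι) :
    extSnoc T i ℓ (Fin.last (m+2)) = ℓ :=
  Fin.snoc_last _ _

lemma extSnoc_castSucc {ι : Type} {m : ℕ} (T : Finset ι) (i : Fin (m+2) → {x : ι // x ∈ T})
    (ℓ : ι) (j : Fin (m+2)) : extSnoc T i ℓ (Fin.castSucc j) = (i j).val :=
  Fin.snoc_castSucc _ _ _

lemma extSnoc_ne_last {ι : Type} {m : ℕ} (T : Finset ι) (i : Fin (m+2) → {x : ι // x ∈ T})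
    (ℓ : ι) (j : Fin (m+3)) (hj : j ≠ Fin.last (m+2)) :
    extSnoc T i ℓ j = (i (j.castPred hj)).val := by
  obtain ⟨j', rfl⟩ : ∃ j', j = Fin.castSucc j' :=
    ⟨j.castPred hj, (Fin.castSucc_castPred _ _).symm⟩
  rw [extSnoc_castSucc]
  congr 1

lemma extSnoc_zero {ι : Type} {m : ℕ} (T : Finset ι) (i : Fin (m+2) → {x : ι // x ∈ T}) (ℓ : ι) :
    extSnoc T i ℓ 0 = (i 0).val := by
  rw [show (0 : Fin (m+3)) = Fin.castSucc 0 from (Fin.castSucc_zero).symm, extSnoc_castSucc]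

/-- Base case: a 2-tensor version. -/
lemma diag_bound_base {ι : Type} [Fintype ι] [DecidableEq ι] (c : ι → F) (hc : ∀ i, c i ≠ 0)
    (α : Type) [DecidableEq α] (S : Finset α) (slot : α → Fin 2) (f : α → ι → F)
    (g : α → (Fin 2 → ι) → F)
    (hg : ∀ a ∈ S, ∀ i i' : Fin 2 → ι, (∀ j, j ≠ slot a → i j = i' j) → g a i = g a i')
    (heq : ∀ i : Fin 2 → ι,
      (∑ a ∈ S, f a (i (slot a)) * g a i) = if (∀ j, i j = i 0) then c (i 0) else 0) :
    Fintype.card ι ≤ S.card := by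
  classical
  cases isEmpty_or_nonempty ι with
  | inl hemp => simp [Fintype.card_eq_zero]
  | inr hne =>
  obtain ⟨istar⟩ := hne
  set Sl : Finset α := S.filter (fun a => slot a = 1) with hSl
  set S' : Finset α := S.filter (fun a => ¬ slot a = 1) with hS'
  set H : Submodule F (ι → F) :=
    LinearMap.ker (PhiMap F (fun (a : {a : α // a ∈ Sl}) => f a.val)) with hH
  have hHmem : ∀ w ∈ H, ∀ a ∈ Sl, ∑ i, f a i * w i = 0 := by
    intro w hw a ha
    exact (mem_ker_PhiMap _ _).mp hw ⟨a, ha⟩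
  -- the multiplication-by-c map
  set φ : (ι → F) →ₗ[F] (ι → F) :=
    { toFun := fun h i => c i * h i
      map_add' := by intro h1 h2; funext i; simp [mul_add]
      map_smul' := by intro r h; funext i; simp; ring } with hφ
  have hφinj : Function.Injective φ := by
    intro h1 h2 he
    funext i
    have := congrFun he i
    simp only [hφ, LinearMap.coe_mk, AddHom.coe_mk] at this
    exact mul_left_cancel₀ (hc i) this
  set Sp : Submodule F (ι → F) := Submodule.span F (↑(S'.image f) : Set (ι → F)) with hSp
  have hmap : Submodule.map φ H ≤ Sp := by
    rintro - ⟨w, hw, rfl⟩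
    have key : ∀ i0 : ι, c i0 * w i0 =
        ∑ a ∈ S', (∑ ℓ, g a ![istar, ℓ] * w ℓ) * f a i0 := by
      intro i0
      have h1 : ∑ ℓ, (∑ a ∈ S, f a ((![i0, ℓ]) (slot a)) * g a ![i0, ℓ]) * w ℓ
          = c i0 * w i0 := by
        have : ∀ ℓ : ι, (∑ a ∈ S, f a ((![i0, ℓ]) (slot a)) * g a ![i0, ℓ]) * w ℓ
            = (if ℓ = i0 then c i0 else 0) * w ℓ := by
          intro ℓ
          rw [heq ![i0, ℓ]]
          congr 1
          have hcond : (∀ j : Fin 2, (![i0, ℓ]) j = (![i0, ℓ]) 0) ↔ ℓ = i0 := by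
            rw [Fin.forall_fin_two]
            simp
          simp only [Matrix.cons_val_zero]
          by_cases hc2 : ℓ = i0
          · rw [if_pos hc2]; exact if_pos (by rw [Fin.forall_fin_two]; simp [hc2])
          · rw [if_neg hc2]; exact if_neg (by rw [Fin.forall_fin_two]; simp [hc2])
        rw [Finset.sum_congr rfl (fun ℓ _ => this ℓ)]
        simp [ite_mul]
      -- now expand the other way
      have h2 : ∑ ℓ, (∑ a ∈ S, f a ((![i0, ℓ]) (slot a)) * g a ![i0, ℓ]) * w ℓ
          = ∑ a ∈ S, ∑ ℓ, f a ((![i0, ℓ]) (slot a)) * g a ![i0, ℓ] * w ℓ := by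
        rw [Finset.sum_comm]
        simp [Finset.sum_mul]
      have h3 : ∀ a ∈ Sl, ∑ ℓ, f a ((![i0, ℓ]) (slot a)) * g a ![i0, ℓ] * w ℓ = 0 := by
        intro a ha
        have hs1 : slot a = 1 := (Finset.mem_filter.mp ha).2
        have haS : a ∈ S := (Finset.mem_filter.mp ha).1
        have : ∀ ℓ : ι, f a ((![i0, ℓ]) (slot a)) * g a ![i0, ℓ] * w ℓ
            = g a ![i0, i0] * (f a ℓ * w ℓ) := by
          intro ℓ
          have hgq : g a ![i0, ℓ] = g a ![i0, i0] := by
            apply hg a haS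
            intro j hj
            rw [hs1] at hj
            have : j = 0 := by omega
            subst this; simp
          rw [hgq, hs1]
          simp [Matrix.cons_val_one]
          ring
        rw [Finset.sum_congr rfl (fun ℓ _ => this ℓ), ← Finset.mul_sum]
        rw [hHmem w hw a ha, mul_zero]
      have h4 : ∀ a ∈ S', ∑ ℓ, f a ((![i0, ℓ]) (slot a)) * g a ![i0, ℓ] * w ℓ
          = (∑ ℓ, g a ![istar, ℓ] * w ℓ) * f a i0 := by
        intro a ha
        have hs1 : ¬ slot a = 1 := (Finset.mem_filter.mp ha).2
        have haS : a ∈ S := (Finset.mem_filter.mp ha).1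
        have hs0 : slot a = 0 := by omega
        have : ∀ ℓ : ι, f a ((![i0, ℓ]) (slot a)) * g a ![i0, ℓ] * w ℓ
            = f a i0 * (g a ![istar, ℓ] * w ℓ) := by
          intro ℓ
          have hgq : g a ![i0, ℓ] = g a ![istar, ℓ] := by
            apply hg a haS
            intro j hj
            rw [hs0] at hj
            have : j = 1 := by omega
            subst this; simp
          rw [hgq, hs0]
          simp [Matrix.cons_val_zero]
          ring
        rw [Finset.sum_congr rfl (fun ℓ _ => this ℓ), ← Finset.mul_sum]
        ring
      have h5 : ∑ a ∈ S, ∑ ℓ, f a ((![i0, ℓ]) (slot a)) * g a ![i0, ℓ] * w ℓ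
          = ∑ a ∈ S', (∑ ℓ, g a ![istar, ℓ] * w ℓ) * f a i0 := by
        rw [← Finset.sum_filter_add_sum_filter_not S (fun a => ¬ slot a = 1)]
        have e1 : S.filter (fun a => ¬¬ slot a = 1) = Sl := by
          rw [hSl]; congr 1; ext a; simp
        rw [e1]
        rw [Finset.sum_congr rfl h3, Finset.sum_congr rfl h4]
        simp
      rw [← h1, h2, h5]
    -- conclude membership in the span
    have : φ w = ∑ a ∈ S', (∑ ℓ, g a ![istar, ℓ] * w ℓ) • f a := by
      funext i0
      show c i0 * w i0 = _
      rw [key i0]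
      simp [Finset.sum_apply, Pi.smul_apply, smul_eq_mul]
    rw [this]
    apply Submodule.sum_mem
    intro a ha
    apply Submodule.smul_mem
    apply Submodule.subset_span
    exact Finset.mem_coe.mpr (Finset.mem_image_of_mem f ha)
  -- dimension count
  have hr1 : Fintype.card ι ≤ Sl.card + Module.finrank F ↥H := by
    have := card_le_card_add_finrank_ker (F := F) (fun (a : {a : α // a ∈ Sl}) => f a.val)
    rwa [Fintype.card_coe] at this
  have hr2 : Module.finrank F ↥H ≤ S'.card := by
    have e : Module.finrank F ↥H = Module.finrank F ↥(Submodule.map φ H) :=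
      (Submodule.equivMapOfInjective φ hφinj H).finrank_eq
    rw [e]
    calc Module.finrank F ↥(Submodule.map φ H) ≤ Module.finrank F ↥Sp :=
          Submodule.finrank_mono hmap
      _ ≤ (S'.image f).card := finrank_span_finset_le_card _
      _ ≤ S'.card := Finset.card_image_le
  have hpart : Sl.card + S'.card = S.card := by
    rw [hSl, hS']
    exact Finset.card_filter_add_card_filter_not _
  omega

lemma diag_bound (m : ℕ) : ∀ (ι : Type) [Fintype ι] [DecidableEq ι],
    ∀ (c : ι → F), (∀ i, c i ≠ 0) →
    ∀ (α : Type) [DecidableEq α] (S : Finset α) (slot : α → Fin (m+2)) (f : α → ι → F)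
      (g : α → (Fin (m+2) → ι) → F),
      (∀ a ∈ S, ∀ i i' : Fin (m+2) → ι, (∀ j, j ≠ slot a → i j = i' j) → g a i = g a i') →
      (∀ i : Fin (m+2) → ι,
        (∑ a ∈ S, f a (i (slot a)) * g a i) = if (∀ j, i j = i 0) then c (i 0) else 0) →
      Fintype.card ι ≤ S.card := by
  induction m with
  | zero =>
    intro ι _ _ c hc α _ S slot f g hg heq
    exact diag_bound_base c hc α S slot f g hg heq
  | succ m ih =>
    intro ι _ _ c hc α _ S slot f g hg heq
    classical
    set lst : Fin (m+3) := Fin.last (m+2) with hlst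
    set Sl : Finset α := S.filter (fun a => slot a = lst) with hSl
    set S' : Finset α := S.filter (fun a => ¬ slot a = lst) with hS'
    set H : Submodule F (ι → F) :=
      LinearMap.ker (PhiMap F (fun (a : {a : α // a ∈ Sl}) => f a.val)) with hH
    have hHmem : ∀ w ∈ H, ∀ a ∈ Sl, ∑ i, f a i * w i = 0 := fun w hw a ha =>
      (mem_ker_PhiMap _ _).mp hw ⟨a, ha⟩
    obtain ⟨h, hhH, hhsupp⟩ := exists_max_support H
    set T : Finset ι := Finset.univ.filter (fun i => h i ≠ 0) with hT
    have hTne : ∀ i : {x : ι // x ∈ T}, h i.val ≠ 0 := fun i =>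
      (Finset.mem_filter.mp i.2).2
    have step : Fintype.card {x : ι // x ∈ T} ≤ S'.card := by
      refine ih {x : ι // x ∈ T} (fun i => c i.val * h i.val)
        (fun i => mul_ne_zero (hc i.val) (hTne i)) α S'
        (fun a => if hne : slot a = lst then 0 else (slot a).castPred hne)
        (fun a i => f a i.val)
        (fun a i => ∑ ℓ, g a (extSnoc T i ℓ) * h ℓ) ?_ ?_
      · -- independence
        intro a ha i i' hii
        have hane : ¬ slot a = lst := (Finset.mem_filter.mp ha).2
        have haS : a ∈ S := (Finset.mem_filter.mp ha).1
        refine Finset.sum_congr rfl fun ℓ _ => ?_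
        congr 1
        apply hg a haS
        intro j hj
        rcases eq_or_ne j lst with rfl | hjne
        · rw [hlst] at *
          rw [extSnoc_last, extSnoc_last]
        · rw [hlst] at hjne
          rw [extSnoc_ne_last T i ℓ j hjne, extSnoc_ne_last T i' ℓ j hjne]
          have hj' : j.castPred hjne ≠ (if hne : slot a = lst then 0 else (slot a).castPred hne) := by
            rw [dif_neg hane]
            intro hcontra
            apply hj
            have := congrArg Fin.castSucc hcontra
            rwa [Fin.castSucc_castPred, Fin.castSucc_castPred] at this
          exact congrArg Subtype.val (hii _ hj')
      · -- the contracted identity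
        intro i
        have e1 : ∀ a ∈ S',
            f a (i (if hne : slot a = lst then 0 else (slot a).castPred hne)).val *
              (∑ ℓ, g a (extSnoc T i ℓ) * h ℓ)
            = ∑ ℓ, f a (extSnoc T i ℓ (slot a)) * g a (extSnoc T i ℓ) * h ℓ := by
          intro a ha
          have hane : ¬ slot a = lst := (Finset.mem_filter.mp ha).2
          rw [Finset.mul_sum]
          refine Finset.sum_congr rfl fun ℓ _ => ?_
          rw [extSnoc_ne_last T i ℓ (slot a) hane]
          rw [dif_neg hane]
          ring
        have e2 : ∀ a ∈ Sl,
            (0 : F) = ∑ ℓ, f a (extSnoc T i ℓ (slot a)) * g a (extSnoc T i ℓ) * h ℓ := by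
          intro a ha
          have hae : slot a = lst := (Finset.mem_filter.mp ha).2
          have haS : a ∈ S := (Finset.mem_filter.mp ha).1
          have hgc : ∀ ℓ, g a (extSnoc T i ℓ) = g a (extSnoc T i (i 0).val) := by
            intro ℓ
            apply hg a haS
            intro j hj
            rw [hae, hlst] at hj
            rw [extSnoc_ne_last T i ℓ j hj, extSnoc_ne_last T i _ j hj]
          calc (0 : F) = g a (extSnoc T i (i 0).val) * ∑ ℓ, f a ℓ * h ℓ := by
                rw [hHmem h hhH a ha, mul_zero]
            _ = ∑ ℓ, f a (extSnoc T i ℓ (slot a)) * g a (extSnoc T i ℓ) * h ℓ := by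
                rw [Finset.mul_sum]
                refine Finset.sum_congr rfl fun ℓ _ => ?_
                rw [hgc ℓ, hae, hlst, extSnoc_last]
                ring
        calc ∑ a ∈ S', f a (i (if hne : slot a = lst then 0 else (slot a).castPred hne)).val *
              (∑ ℓ, g a (extSnoc T i ℓ) * h ℓ)
            = ∑ a ∈ S', ∑ ℓ, f a (extSnoc T i ℓ (slot a)) * g a (extSnoc T i ℓ) * h ℓ :=
              Finset.sum_congr rfl e1
          _ = ∑ a ∈ S', (∑ ℓ, f a (extSnoc T i ℓ (slot a)) * g a (extSnoc T i ℓ) * h ℓ)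
              + ∑ a ∈ Sl, ∑ ℓ, f a (extSnoc T i ℓ (slot a)) * g a (extSnoc T i ℓ) * h ℓ := by
              rw [← Finset.sum_congr rfl e2]
              simp
          _ = ∑ a ∈ S, ∑ ℓ, f a (extSnoc T i ℓ (slot a)) * g a (extSnoc T i ℓ) * h ℓ := by
              have hSl2 : Sl = S.filter (fun a => ¬ ¬ slot a = lst) := by
                rw [hSl]
                apply Finset.filter_congr
                intro a _
                simp
              rw [hSl2, hS', Finset.sum_filter_add_sum_filter_not]
          _ = ∑ ℓ, (∑ a ∈ S, f a (extSnoc T i ℓ (slot a)) * g a (extSnoc T i ℓ)) * h ℓ := by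
              rw [Finset.sum_comm]
              simp [Finset.sum_mul]
          _ = ∑ ℓ, (if (∀ j, extSnoc T i ℓ j = extSnoc T i ℓ 0)
                then c (extSnoc T i ℓ 0) else 0) * h ℓ := by
              refine Finset.sum_congr rfl fun ℓ _ => ?_
              rw [heq (extSnoc T i ℓ)]
          _ = (if (∀ j, i j = i 0) then c (i 0).val * h (i 0).val else 0) := by
              have hcnd : ∀ ℓ, (∀ j, extSnoc T i ℓ j = extSnoc T i ℓ 0)
                  ↔ ((∀ j', i j' = i 0) ∧ ℓ = (i 0).val) := by
                intro ℓ
                constructor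
                · intro hall
                  constructor
                  · intro j'
                    apply Subtype.ext
                    have := hall (Fin.castSucc j')
                    rwa [extSnoc_castSucc, extSnoc_zero] at this
                  · have := hall (Fin.last (m+2))
                    rwa [extSnoc_last, extSnoc_zero] at this
                · rintro ⟨hconst, rfl⟩ j
                  rw [extSnoc_zero]
                  rcases eq_or_ne j (Fin.last (m+2)) with rfl | hjne
                  · rw [extSnoc_last]
                  · rw [extSnoc_ne_last T i _ j hjne]
                    exact congrArg Subtype.val (hconst _)
              by_cases hP : ∀ j' : Fin (m+2), i j' = i 0
              · rw [if_pos hP]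
                have : ∀ ℓ, (if (∀ j, extSnoc T i ℓ j = extSnoc T i ℓ 0)
                    then c (extSnoc T i ℓ 0) else 0) * h ℓ
                    = (if ℓ = (i 0).val then c (i 0).val else 0) * h ℓ := by
                  intro ℓ
                  congr 1
                  by_cases hℓ : ℓ = (i 0).val
                  · rw [if_pos ((hcnd ℓ).mpr ⟨hP, hℓ⟩), if_pos hℓ, extSnoc_zero]
                  · rw [if_neg (fun hh => hℓ ((hcnd ℓ).mp hh).2), if_neg hℓ]
                rw [Finset.sum_congr rfl fun ℓ _ => this ℓ]
                simp [ite_mul]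
              · rw [if_neg hP]
                refine Finset.sum_eq_zero fun ℓ _ => ?_
                rw [if_neg (fun hh => hP ((hcnd ℓ).mp hh).1), zero_mul]
    -- final count
    have hr1 : Fintype.card ι ≤ Sl.card + Module.finrank F ↥H := by
      have := card_le_card_add_finrank_ker (F := F) (fun (a : {a : α // a ∈ Sl}) => f a.val)
      rwa [Fintype.card_coe] at this
    have hr2 : Module.finrank F ↥H ≤ T.card := hhsupp
    have hr3 : Fintype.card {x : ι // x ∈ T} = T.card := Fintype.card_coe _
    have hpart : Sl.card + S'.card = S.card := by
      rw [hSl, hS']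
      exact Finset.card_filter_add_card_filter_not _
    omega

end Diag

section Core

/-- evaluation of the monomial with exponent vector `a` at the point `v` -/
def monoEval {p : ℕ} {μ : Type} [Fintype μ] (v : μ → ZMod p) (a : μ → ℕ) : ZMod p :=
  ∏ m, v m ^ a m

lemma core_bound (p k : ℕ) (hp : p.Prime) (hp2 : 2 ≤ p) (hk : 3 ≤ k)
    (μ : Type) [Fintype μ] [DecidableEq μ] (ι : Type) [Fintype ι] [DecidableEq ι]
    (x : Fin k → ι → (μ → ZMod p))
    (hx : ∀ i : Fin k → ι, (∑ j, x j (i j)) = 0 ↔ ∀ j j', i j = i j') :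
    Fintype.card ι ≤ k *
      ((Fintype.piFinset fun _ : μ => Finset.range p).filter
        (fun a : μ → ℕ => k * (∑ m, a m) ≤ (p-1) * Fintype.card μ)).card := by
  classical
  haveI : Fact p.Prime := ⟨hp⟩
  obtain ⟨m, rfl⟩ : ∃ m, k = m + 2 := ⟨k - 2, by omega⟩
  set B : ℕ := (p-1) * Fintype.card μ with hB
  set T : Finset (Fin (m+2) → ℕ) :=
    Finset.piAntidiag Finset.univ 0 ∪ Finset.piAntidiag Finset.univ (p-1) with hT
  set cE : (Fin (m+2) → ℕ) → ZMod p :=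
    (fun e => (if ∑ j, e j = 0 then 1 else -1) * (Nat.multinomial Finset.univ e : ZMod p))
    with hcE
  have hdisj : Disjoint (Finset.piAntidiag (Finset.univ : Finset (Fin (m+2))) 0)
      (Finset.piAntidiag (Finset.univ : Finset (Fin (m+2))) (p-1)) := by
    rw [Finset.disjoint_left]
    intro e h0 h1
    have e0 := (Finset.mem_piAntidiag.mp h0).1
    have e1 := (Finset.mem_piAntidiag.mp h1).1
    omega
  have hfac : ∀ w : Fin (m+2) → ZMod p,
      1 - (∑ j, w j)^(p-1) = ∑ e ∈ T, cE e * ∏ j, w j ^ e j := by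
    intro w
    rw [hT, Finset.sum_union hdisj, Finset.piAntidiag_zero]
    have h1 : ∑ e ∈ ({0} : Finset (Fin (m+2) → ℕ)), cE e * ∏ j, w j ^ e j = 1 := by
      rw [Finset.sum_singleton]
      simp [hcE, Nat.multinomial]
    rw [h1]
    have h2 : ∑ e ∈ Finset.piAntidiag (Finset.univ : Finset (Fin (m+2))) (p-1),
        cE e * ∏ j, w j ^ e j = -((∑ j, w j)^(p-1)) := by
      rw [Finset.sum_pow_eq_sum_piAntidiag, ← Finset.sum_neg_distrib]
      refine Finset.sum_congr rfl fun e he => ?_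
      have hes : ∑ j, e j = p - 1 := (Finset.mem_piAntidiag.mp he).1
      rw [hcE]
      simp only
      rw [if_neg (by omega)]
      ring
    rw [h2]
    ring
  set 𝓔 : Finset (μ → (Fin (m+2) → ℕ)) := Fintype.piFinset (fun _ : μ => T) with h𝓔
  set CC : (μ → (Fin (m+2) → ℕ)) → ZMod p := fun E => ∏ mm, cE (E mm) with hCC
  set AA : Fin (m+2) → (μ → (Fin (m+2) → ℕ)) → (μ → ℕ) := fun j E mm => E mm j with hAA
  set deg : Fin (m+2) → (μ → (Fin (m+2) → ℕ)) → ℕ := fun j E => ∑ mm, E mm j with hdeg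
  have hrowsum : ∀ E ∈ 𝓔, ∀ mm : μ, ∑ j, E mm j ≤ p - 1 := by
    intro E hE mm
    have := Fintype.mem_piFinset.mp hE mm
    rw [hT, Finset.mem_union] at this
    rcases this with h' | h'
    · have h1 : ∑ j, E mm j = 0 := by simpa using (Finset.mem_piAntidiag.mp h').1
      omega
    · have h1 : ∑ j, E mm j = p - 1 := by simpa using (Finset.mem_piAntidiag.mp h').1
      omega
  have hpivne : ∀ E ∈ 𝓔, (Finset.univ.filter fun j => (m+2) * deg j E ≤ B).Nonempty := by
    intro E hE
    have hsum : ∑ j, (m+2) * deg j E ≤ ∑ _j : Fin (m+2), B := by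
      rw [Finset.sum_const, ← Finset.mul_sum]
      have : ∑ j, deg j E ≤ B := by
        rw [hdeg, hB]
        simp only
        rw [Finset.sum_comm]
        calc ∑ mm : μ, ∑ j, E mm j ≤ ∑ _mm : μ, (p-1) :=
              Finset.sum_le_sum (fun mm _ => hrowsum E hE mm)
          _ = (p-1) * Fintype.card μ := by
              rw [Finset.sum_const, smul_eq_mul, Fintype.card, mul_comm]
      calc (m+2) * ∑ j, deg j E ≤ (m+2) * B := Nat.mul_le_mul_left _ this
        _ = Finset.univ.card • B := by
            rw [Finset.card_univ, Fintype.card_fin, smul_eq_mul]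
    obtain ⟨j, hj, hj2⟩ := Finset.exists_le_of_sum_le Finset.univ_nonempty hsum
    exact ⟨j, Finset.mem_filter.mpr ⟨hj, hj2⟩⟩
  set piv : (μ → (Fin (m+2) → ℕ)) → Fin (m+2) := fun E =>
    if hE : (Finset.univ.filter fun j => (m+2) * deg j E ≤ B).Nonempty
    then (Finset.univ.filter fun j => (m+2) * deg j E ≤ B).min' hE else 0 with hpiv
  have hpivdeg : ∀ E ∈ 𝓔, (m+2) * deg (piv E) E ≤ B := by
    intro E hE
    rw [hpiv]
    simp only
    rw [dif_pos (hpivne E hE)]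
    have := Finset.min'_mem _ (hpivne E hE)
    exact (Finset.mem_filter.mp this).2
  set S : Finset (Fin (m+2) × (μ → ℕ)) := 𝓔.image (fun E => (piv E, AA (piv E) E)) with hS
  -- the key identity, proved by expanding the product of geometric-like factors
  have key : ∀ i : Fin (m+2) → ι,
      (∑ s ∈ S, monoEval (x s.1 (i s.1)) s.2 *
        (∑ E ∈ 𝓔.filter (fun E => (piv E, AA (piv E) E) = s),
          CC E * ∏ j ∈ Finset.univ.erase s.1, monoEval (x j (i j)) (AA j E)))
      = if (∀ j, i j = i 0) then (1 : ZMod p) else 0 := by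
    intro i
    have step1 : ∀ s ∈ S, monoEval (x s.1 (i s.1)) s.2 *
        (∑ E ∈ 𝓔.filter (fun E => (piv E, AA (piv E) E) = s),
          CC E * ∏ j ∈ Finset.univ.erase s.1, monoEval (x j (i j)) (AA j E))
        = ∑ E ∈ 𝓔.filter (fun E => (piv E, AA (piv E) E) = s),
            CC E * ∏ j, monoEval (x j (i j)) (AA j E) := by
      intro s _
      rw [Finset.mul_sum]
      refine Finset.sum_congr rfl fun E hE => ?_
      have hfib : (piv E, AA (piv E) E) = s := (Finset.mem_filter.mp hE).2
      have h1 : s.2 = AA s.1 E := by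
        rw [← hfib]
      rw [h1, ← Finset.mul_prod_erase Finset.univ
        (fun j => monoEval (x j (i j)) (AA j E)) (Finset.mem_univ s.1)]
      ring
    rw [Finset.sum_congr rfl step1]
    rw [Finset.sum_fiberwise_of_maps_to (fun E hE => Finset.mem_image_of_mem _ hE)]
    -- now the plain expansion
    have expand : ∑ E ∈ 𝓔, CC E * ∏ j, monoEval (x j (i j)) (AA j E)
        = ∏ mm : μ, (1 - ((∑ j, x j (i j)) mm)^(p-1)) := by
      have e1 : ∀ mm : μ, (1 - ((∑ j, x j (i j)) mm)^(p-1))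
          = ∑ e ∈ T, cE e * ∏ j, (x j (i j) mm) ^ e j := by
        intro mm
        rw [← hfac (fun j => x j (i j) mm)]
        congr 1
        rw [Finset.sum_apply]
      rw [Finset.prod_congr rfl (fun mm _ => e1 mm), Finset.prod_univ_sum]
      refine Finset.sum_congr rfl fun E hE => ?_
      rw [Finset.prod_mul_distrib]
      congr 1
      rw [Finset.prod_comm]
      exact Finset.prod_congr rfl fun j _ => rfl
    rw [expand]
    -- evaluate the product of indicators
    by_cases hz : (∑ j, x j (i j)) = 0
    · have hall : ∀ j, i j = i 0 := fun j => (hx i).mp hz j 0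
      rw [if_pos hall]
      refine Finset.prod_eq_one fun mm _ => ?_
      have : (∑ j, x j (i j)) mm = 0 := by rw [hz]; rfl
      rw [this, zero_pow (by omega), sub_zero]
    · have hnall : ¬ (∀ j, i j = i 0) := by
        intro hcon
        apply hz
        apply (hx i).mpr
        intro j j'
        rw [hcon j, hcon j']
      rw [if_neg hnall]
      obtain ⟨mm, hmm⟩ := Function.ne_iff.mp hz
      refine Finset.prod_eq_zero (Finset.mem_univ mm) ?_
      rw [ZMod.pow_card_sub_one_eq_one hmm, sub_self]
  -- apply the diagonal bound
  have main : Fintype.card ι ≤ S.card := by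
    refine diag_bound m ι (fun _ => (1 : ZMod p)) (fun _ => one_ne_zero) _ S Prod.fst
      (fun s ℓ => monoEval (x s.1 ℓ) s.2)
      (fun s i => ∑ E ∈ 𝓔.filter (fun E => (piv E, AA (piv E) E) = s),
          CC E * ∏ j ∈ Finset.univ.erase s.1, monoEval (x j (i j)) (AA j E)) ?_ ?_
    · intro s _ i i' hii
      refine Finset.sum_congr rfl fun E _ => ?_
      congr 1
      refine Finset.prod_congr rfl fun j hj => ?_
      rw [hii j (Finset.ne_of_mem_erase hj)]
    · exact key
  refine main.trans ?_
  -- count S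
  have hsub : S ⊆ Finset.univ ×ˢ ((Fintype.piFinset fun _ : μ => Finset.range p).filter
      (fun a : μ → ℕ => (m+2) * (∑ mm, a mm) ≤ (p-1) * Fintype.card μ)) := by
    intro s hs
    obtain ⟨E, hE, rfl⟩ := Finset.mem_image.mp hs
    rw [Finset.mem_product]
    refine ⟨Finset.mem_univ _, Finset.mem_filter.mpr ⟨?_, ?_⟩⟩
    · rw [Fintype.mem_piFinset]
      intro mm
      rw [Finset.mem_range]
      have h1 := hrowsum E hE mm
      have h2 : E mm (piv E) ≤ ∑ j, E mm j :=
        Finset.single_le_sum (fun j _ => Nat.zero_le _) (Finset.mem_univ _)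
      simp only [hAA]
      omega
    · have := hpivdeg E hE
      rw [hdeg] at this
      rw [hB] at this
      exact this
  calc S.card ≤ _ := Finset.card_le_card hsub
    _ = (m+2) * _ := by
        rw [Finset.card_product, Finset.card_univ, Fintype.card_fin]

end Core

lemma gammaSet_nonneg (p k : ℕ) : ∀ s ∈ ((fun t : ℝ =>
    (∑ i ∈ Finset.range p, t ^ i) / t ^ (((p : ℝ) - 1) / k)) '' Set.Ioo 0 1), 0 ≤ s := by
  rintro - ⟨t, ⟨ht0, ht1⟩, rfl⟩
  apply div_nonneg
  · exact Finset.sum_nonneg fun i _ => pow_nonneg ht0.le i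
  · exact Real.rpow_nonneg ht0.le _

lemma gammaPK_nonneg (p k : ℕ) : 0 ≤ GammaPK p k :=
  Real.sInf_nonneg (gammaSet_nonneg p k)

lemma M_le_pow (p k : ℕ) (hp2 : 2 ≤ p) (hk1 : 1 ≤ k)
    (μ : Type) [Fintype μ] [DecidableEq μ]
    {t : ℝ} (ht0 : 0 < t) (ht1 : t < 1) :
    (((Fintype.piFinset fun _ : μ => Finset.range p).filter
        (fun a : μ → ℕ => k * (∑ m, a m) ≤ (p-1) * Fintype.card μ)).card : ℝ)
      ≤ ((∑ i ∈ Finset.range p, t ^ i) / t ^ (((p : ℝ) - 1) / k)) ^ (Fintype.card μ) := by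
  classical
  set n' := Fintype.card μ with hn'
  set e : ℝ := ((p : ℝ) - 1) / k with he
  set 𝓐 := ((Fintype.piFinset fun _ : μ => Finset.range p).filter
      (fun a : μ → ℕ => k * (∑ m, a m) ≤ (p-1) * n')) with h𝓐
  have hte : (0:ℝ) < t ^ (e * n') := Real.rpow_pos_of_pos ht0 _
  have key : (𝓐.card : ℝ) * t ^ (e * n') ≤ (∑ i ∈ Finset.range p, t ^ i) ^ n' := by
    have step1 : (𝓐.card : ℝ) * t ^ (e * n') = ∑ _a ∈ 𝓐, t ^ (e * n') := by
      rw [Finset.sum_const, nsmul_eq_mul]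
    have step2 : ∀ a ∈ 𝓐, t ^ (e * n') ≤ t ^ ((∑ m, a m : ℕ) : ℝ) := by
      intro a ha
      apply Real.rpow_le_rpow_of_exponent_ge ht0 ht1.le
      have hcond := (Finset.mem_filter.mp ha).2
      have hcast : (k : ℝ) * ((∑ m, a m : ℕ) : ℝ) ≤ ((p:ℝ) - 1) * n' := by
        have h1 : ((k * (∑ m, a m) : ℕ) : ℝ) ≤ (((p-1) * n' : ℕ) : ℝ) := Nat.cast_le.mpr hcond
        rw [Nat.cast_mul, Nat.cast_mul, Nat.cast_sub (by omega : 1 ≤ p)] at h1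
        simpa using h1
      rw [he, div_mul_eq_mul_div, le_div_iff₀ (by positivity : (0:ℝ) < (k:ℝ))]
      calc ((∑ m, a m : ℕ) : ℝ) * k = k * ((∑ m, a m : ℕ) : ℝ) := by ring
        _ ≤ ((p:ℝ) - 1) * n' := hcast
    have step3 : ∑ a ∈ 𝓐, t ^ ((∑ m, a m : ℕ) : ℝ)
        ≤ ∑ a ∈ (Fintype.piFinset fun _ : μ => Finset.range p), t ^ ((∑ m, a m : ℕ) : ℝ) := by
      apply Finset.sum_le_sum_of_subset_of_nonneg (Finset.filter_subset _ _)
      intro a _ _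
      exact Real.rpow_nonneg ht0.le _
    have step4 : ∑ a ∈ (Fintype.piFinset fun _ : μ => Finset.range p),
        t ^ ((∑ m, a m : ℕ) : ℝ) = (∑ i ∈ Finset.range p, t ^ i) ^ n' := by
      have : ∀ a : μ → ℕ, t ^ ((∑ m, a m : ℕ) : ℝ) = ∏ m, t ^ (a m) := by
        intro a
        rw [Real.rpow_natCast, ← Finset.prod_pow_eq_pow_sum]
      rw [Finset.sum_congr rfl (fun a _ => this a), ← Finset.prod_univ_sum]
      rw [Finset.prod_const, Finset.card_univ, hn']
    calc (𝓐.card : ℝ) * t ^ (e * n') = ∑ _a ∈ 𝓐, t ^ (e * n') := step1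
      _ ≤ ∑ a ∈ 𝓐, t ^ ((∑ m, a m : ℕ) : ℝ) := Finset.sum_le_sum step2
      _ ≤ _ := step3
      _ = _ := step4
  rw [div_pow]
  have hden : (t ^ e) ^ n' = t ^ (e * n') := by
    rw [← Real.rpow_natCast (t ^ e) n', ← Real.rpow_mul ht0.le]
  rw [hden, le_div_iff₀ hte]
  exact key

lemma M_le_gamma_pow (p k : ℕ) (hp2 : 2 ≤ p) (hk1 : 1 ≤ k)
    (μ : Type) [Fintype μ] [DecidableEq μ] (hμ : Fintype.card μ ≠ 0) :
    (((Fintype.piFinset fun _ : μ => Finset.range p).filter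
        (fun a : μ → ℕ => k * (∑ m, a m) ≤ (p-1) * Fintype.card μ)).card : ℝ)
      ≤ GammaPK p k ^ (Fintype.card μ) := by
  classical
  set n' := Fintype.card μ with hn'
  set M : ℝ := (((Fintype.piFinset fun _ : μ => Finset.range p).filter
      (fun a : μ → ℕ => k * (∑ m, a m) ≤ (p-1) * Fintype.card μ)).card : ℝ) with hM
  have hM0 : 0 ≤ M := Nat.cast_nonneg _
  set β : ℝ := M ^ ((n' : ℝ)⁻¹) with hβ
  have hβ0 : 0 ≤ β := Real.rpow_nonneg hM0 _
  have hβle : β ≤ GammaPK p k := by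
    apply le_csInf
    · exact ⟨_, Set.mem_image_of_mem _ (by constructor <;> norm_num : (1/2 : ℝ) ∈ Set.Ioo 0 1)⟩
    · rintro - ⟨t, ⟨ht0, ht1⟩, rfl⟩
      have hs0 : (0:ℝ) ≤ (∑ i ∈ Finset.range p, t ^ i) / t ^ (((p : ℝ) - 1) / k) := by
        apply div_nonneg
        · exact Finset.sum_nonneg fun i _ => pow_nonneg ht0.le i
        · exact Real.rpow_nonneg ht0.le _
      have hMle := M_le_pow p k hp2 hk1 μ ht0 ht1
      calc β ≤ ((((∑ i ∈ Finset.range p, t ^ i) / t ^ (((p : ℝ) - 1) / k)) ^ n') : ℝ)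
            ^ ((n' : ℝ)⁻¹) := Real.rpow_le_rpow hM0 hMle (by positivity)
        _ = _ := Real.pow_rpow_inv_natCast hs0 hμ
  calc M = β ^ n' := (Real.rpow_inv_natCast_pow hM0 hμ).symm
    _ ≤ GammaPK p k ^ n' := pow_le_pow_left₀ hβ0 hβle n'


/-- For `k ≥ 3`, a prime `p ≥ 3` and `n ≥ 1`, any `k`-colored sum-free set
`(x_{1,i}, …, x_{k,i})_{i=1}^L` in `𝔽_p^n` (i.e. a collection of `k`-tuples such that
`x_{1,i₁} + ⋯ + x_{k,i_k} = 0` iff `i₁ = ⋯ = i_k`) has size `L ≤ Γ_{p,k}^n`. -/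
theorem stmt4 {k p n : ℕ} (hk : 3 ≤ k) (hp : p.Prime) (hp3 : 3 ≤ p) (hn : 0 < n)
    (L : ℕ) (x : Fin k → Fin L → (Fin n → ZMod p))
    (h : ∀ i : Fin k → Fin L, ∑ j, x j (i j) = 0 ↔ ∀ j j', i j = i j') :
    (L : ℝ) ≤ GammaPK p k ^ n := by
  classical
  by_cases hL : L = 0
  · subst hL
    simpa using pow_nonneg (gammaPK_nonneg p k) n
  have hL1 : 1 ≤ L := Nat.one_le_iff_ne_zero.mpr hL
  set G : ℝ := GammaPK p k ^ n with hG
  have hG0 : 0 ≤ G := pow_nonneg (gammaPK_nonneg p k) n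
  have hpow : ∀ mm : ℕ, 1 ≤ mm → ((L : ℝ)) ^ mm ≤ (k : ℝ) * G ^ mm := by
    intro mm hmm
    set x' : Fin k → (Fin mm → Fin L) → ((Fin mm × Fin n) → ZMod p) :=
      fun j I q => x j (I q.1) q.2 with hx'def
    have hx' : ∀ I : Fin k → (Fin mm → Fin L),
        (∑ j, x' j (I j)) = 0 ↔ ∀ j j', I j = I j' := by
      intro I
      have e1 : (∑ j, x' j (I j)) = 0 ↔ ∀ b, (∑ j, x j (I j b)) = 0 := by
        rw [funext_iff]
        constructor
        · intro hq b
          funext cc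
          have := hq (b, cc)
          rw [Finset.sum_apply] at this
          rw [Finset.sum_apply]
          simpa using this
        · intro hb q
          rw [Finset.sum_apply]
          have := congrFun (hb q.1) q.2
          rw [Finset.sum_apply] at this
          simpa using this
      rw [e1]
      constructor
      · intro hb j j'
        funext b
        exact (h (fun j => I j b)).mp (hb b) j j'
      · intro hall b
        exact (h (fun j => I j b)).mpr (fun j j' => congrFun (hall j j') b)
    have hcore := core_bound p k hp (le_trans (by norm_num : (2:ℕ) ≤ 3) hp3) hk (Fin mm × Fin n) (Fin mm → Fin L) x' hx'
    have hcμ : Fintype.card (Fin mm × Fin n) = mm * n := by simp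
    have hμ0 : Fintype.card (Fin mm × Fin n) ≠ 0 := by
      rw [hcμ]
      have h1 : mm ≠ 0 := Nat.one_le_iff_ne_zero.mp hmm
      have h2 : n ≠ 0 := Nat.pos_iff_ne_zero.mp hn
      exact Nat.mul_ne_zero h1 h2
    have hM := M_le_gamma_pow p k (le_trans (by norm_num : (2:ℕ) ≤ 3) hp3) (le_trans (by norm_num : (1:ℕ) ≤ 3) hk) (Fin mm × Fin n) hμ0
    have hcι : Fintype.card (Fin mm → Fin L) = L ^ mm := by simp
    have chain : ((L ^ mm : ℕ) : ℝ) ≤ (k : ℝ) * (GammaPK p k ^ (mm * n)) := by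
      calc ((L ^ mm : ℕ) : ℝ) = (Fintype.card (Fin mm → Fin L) : ℝ) := by rw [hcι]
        _ ≤ ((k * ((Fintype.piFinset fun _ : (Fin mm × Fin n) => Finset.range p).filter
            (fun a => k * (∑ m, a m) ≤ (p-1) * Fintype.card (Fin mm × Fin n))).card : ℕ) : ℝ) :=
            Nat.cast_le.mpr hcore
        _ = (k : ℝ) * (((Fintype.piFinset fun _ : (Fin mm × Fin n) => Finset.range p).filter
            (fun a => k * (∑ m, a m) ≤ (p-1) * Fintype.card (Fin mm × Fin n))).card : ℝ) := by
            push_cast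
            ring
        _ ≤ (k : ℝ) * (GammaPK p k ^ (Fintype.card (Fin mm × Fin n))) :=
            mul_le_mul_of_nonneg_left hM (by positivity)
        _ = (k : ℝ) * (GammaPK p k ^ (mm * n)) := by rw [hcμ]
    have hsw : GammaPK p k ^ (mm * n) = G ^ mm := by
      rw [hG, ← pow_mul, Nat.mul_comm]
    rw [hsw] at chain
    calc ((L : ℝ)) ^ mm = ((L ^ mm : ℕ) : ℝ) := by push_cast; ring
      _ ≤ (k : ℝ) * G ^ mm := chain
  by_contra hcon
  push_neg at hcon
  have hGpos : 0 < G := by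
    rcases lt_or_eq_of_le hG0 with hpos | hzero
    · exact hpos
    · exfalso
      have h1 := hpow 1 le_rfl
      rw [← hzero] at h1
      simp at h1
      have : (1:ℝ) ≤ (L:ℝ) := by exact_mod_cast hL1
      linarith
  have hr1 : 1 < (L:ℝ)/G := (one_lt_div hGpos).mpr hcon
  obtain ⟨mm, hmm⟩ := pow_unbounded_of_one_lt (k : ℝ) hr1
  have hmm1 : 1 ≤ mm := by
    by_contra hmm0
    push_neg at hmm0
    interval_cases mm
    simp at hmm
    have : (3:ℝ) ≤ (k:ℝ) := by exact_mod_cast hk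
    linarith
  have h2 := hpow mm hmm1
  have h3 : ((L:ℝ)/G)^mm ≤ (k:ℝ) := by
    rw [div_pow, div_le_iff₀ (pow_pos hGpos mm)]
    calc (L:ℝ)^mm ≤ (k:ℝ) * G^mm := h2
      _ = (k:ℝ) * G^mm := rfl
  linarith
end

section
/- For every prime p ≥ 5, one has √(γ_p·p) < Γ_{p,3}. -/
/-- `γ_p = inf_{0<t<1} (1 + t + ⋯ + t^{p-1}) / t^{(p-1)/p}`. -/
noncomputable def gammaP (p : ℕ) : ℝ :=
  sInf ((fun t : ℝ => (∑ i ∈ Finset.range p, t ^ i) / t ^ (((p : ℝ) - 1) / p)) '' Set.Ioo 0 1)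

open Finset Real

lemma amgm_sum (t : ℝ) (ht : 0 < t) (m : ℕ) :
    (m : ℝ) * Real.sqrt (t ^ (m - 1)) ≤ ∑ i ∈ range m, t ^ i := by
  rcases Nat.eq_zero_or_pos m with h | h
  · simp [h]
  have key : ∀ i ∈ range m, 2 * Real.sqrt (t ^ (m - 1)) ≤ t ^ (m - 1 - i) + t ^ i := by
    intro i hi
    rw [mem_range] at hi
    have hmul : t ^ i * t ^ (m - 1 - i) = t ^ (m - 1) := by
      rw [← pow_add]; congr 1; omega
    have h1 : Real.sqrt (t ^ i) ^ 2 = t ^ i := Real.sq_sqrt (by positivity)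
    have h2 : Real.sqrt (t ^ (m - 1 - i)) ^ 2 = t ^ (m - 1 - i) :=
      Real.sq_sqrt (by positivity)
    have h3 : Real.sqrt (t ^ i) * Real.sqrt (t ^ (m - 1 - i)) = Real.sqrt (t ^ (m - 1)) := by
      rw [← Real.sqrt_mul (by positivity), hmul]
    nlinarith [sq_nonneg (Real.sqrt (t ^ i) - Real.sqrt (t ^ (m - 1 - i)))]
  have hsum := Finset.sum_le_sum key
  rw [Finset.sum_const, Finset.card_range, Finset.sum_add_distrib] at hsum
  rw [Finset.sum_range_reflect (fun i => t ^ i) m] at hsum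
  simp only [nsmul_eq_mul] at hsum
  linarith

lemma GammaSet_lower {B : ℝ} (f : ℝ → ℝ)
    (h : ∀ t ∈ Set.Ioo (0:ℝ) 1, B ≤ f t) :
    B ≤ sInf (f '' Set.Ioo 0 1) := by
  apply le_csInf
  · exact ⟨f (1/2), ⟨1/2, by norm_num, rfl⟩⟩
  · rintro b ⟨t, ht, rfl⟩
    exact h t ht

lemma gamma_le (p : ℕ) {t : ℝ} (ht : t ∈ Set.Ioo (0:ℝ) 1) :
    gammaP p ≤ (∑ i ∈ Finset.range p, t ^ i) / t ^ (((p : ℝ) - 1) / p) := by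
  apply csInf_le
  · refine ⟨0, ?_⟩
    rintro b ⟨s, hs, rfl⟩
    have hs0 : (0:ℝ) < s := hs.1
    positivity
  · exact ⟨t, ht, rfl⟩

lemma gamma_nonneg (p : ℕ) : 0 ≤ gammaP p := by
  apply Real.sInf_nonneg
  rintro b ⟨s, hs, rfl⟩
  have hs0 : (0:ℝ) < s := hs.1
  positivity

lemma GammaPK3_lower (p : ℕ) (hp : 2 ≤ p) :
    ((((2 * p + 1) / 3 : ℕ)) : ℝ) ≤ GammaPK p 3 := by
  set m : ℕ := (2 * p + 1) / 3 with hm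
  have hm1 : 1 ≤ m := by omega
  have hmp : m ≤ p := by omega
  apply GammaSet_lower
  rintro t ⟨ht0, ht1⟩
  have hβ : (0:ℝ) < t ^ (((p:ℝ) - 1) / 3) := Real.rpow_pos_of_pos ht0 _
  simp only [Nat.cast_ofNat]
  rw [le_div_iff₀ hβ]
  have hsub : ∑ i ∈ range m, t ^ i ≤ ∑ i ∈ range p, t ^ i := by
    apply Finset.sum_le_sum_of_subset_of_nonneg (Finset.range_subset_range.mpr hmp)
    intro i _ _; positivity
  have hA := amgm_sum t ht0 m
  have hsq : t ^ (((p:ℝ) - 1) / 3) ≤ Real.sqrt (t ^ (m - 1)) := by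
    rw [Real.le_sqrt (le_of_lt hβ)]
    have e1 : (t ^ (((p:ℝ) - 1) / 3)) ^ 2 = t ^ ((((p:ℝ) - 1) / 3) * 2) := by
      rw [← Real.rpow_natCast (t ^ (((p:ℝ) - 1) / 3)) 2, ← Real.rpow_mul (le_of_lt ht0)]
      norm_num
    have e2 : t ^ (m - 1) = t ^ (((m:ℝ) - 1)) := by
      rw [← Real.rpow_natCast t (m - 1)]
      congr 1
      push_cast [Nat.cast_sub hm1]
      ring
    rw [e1, e2]
    apply Real.rpow_le_rpow_of_exponent_ge ht0 (le_of_lt ht1)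
    have h3m : 3 * m ≤ 2 * p + 1 := by omega
    have h3m' : (3:ℝ) * m ≤ 2 * p + 1 := by exact_mod_cast h3m
    linarith
    positivity
  calc (m:ℝ) * t ^ (((p:ℝ) - 1) / 3)
      ≤ (m:ℝ) * Real.sqrt (t ^ (m - 1)) := by
        apply mul_le_mul_of_nonneg_left hsq (by positivity)
    _ ≤ ∑ i ∈ range m, t ^ i := hA
    _ ≤ ∑ i ∈ range p, t ^ i := hsub

lemma case_ge11 {p : ℕ} (hp11 : 11 ≤ p) :
    Real.sqrt (gammaP p * p) < GammaPK p 3 := by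
  have hγ4 : gammaP p < 4 := by
    have h := gamma_le p (t := 1/2) (by norm_num)
    have hS : ∑ i ∈ Finset.range p, ((1:ℝ)/2) ^ i < 2 := by
      rw [geom_sum_eq (by norm_num)]
      have : (0:ℝ) < (1/2:ℝ) ^ p := by positivity
      rw [div_lt_iff_of_neg (by norm_num)]
      linarith
    have hS0 : (0:ℝ) ≤ ∑ i ∈ Finset.range p, ((1:ℝ)/2) ^ i := by positivity
    have hd : (1/2 : ℝ) ≤ (1/2 : ℝ) ^ (((p:ℝ)-1)/p) := by
      have hp0 : (0:ℝ) < p := by positivity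
      have h1 : ((p:ℝ)-1)/p ≤ 1 := by
        rw [div_le_one hp0]; linarith
      calc (1/2:ℝ) = (1/2:ℝ) ^ (1:ℝ) := (Real.rpow_one _).symm
        _ ≤ (1/2:ℝ) ^ (((p:ℝ)-1)/p) :=
            Real.rpow_le_rpow_of_exponent_ge (by norm_num) (by norm_num) h1
    have hcmp : (∑ i ∈ Finset.range p, ((1:ℝ)/2) ^ i) / (1/2:ℝ) ^ (((p:ℝ)-1)/p)
        ≤ (∑ i ∈ Finset.range p, ((1:ℝ)/2) ^ i) / (1/2:ℝ) := by
      gcongr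
    have h4 : (∑ i ∈ Finset.range p, ((1:ℝ)/2) ^ i) / (1/2:ℝ) < 4 := by
      rw [div_lt_iff₀ (by norm_num)]; linarith
    linarith
  have hΓ := GammaPK3_lower p (by omega)
  set m : ℕ := (2 * p + 1) / 3 with hm
  have hγ0 := gamma_nonneg p
  have hp' : (11:ℝ) ≤ p := by exact_mod_cast hp11
  have hm' : 2 * (p:ℝ) - 1 ≤ 3 * m := by
    have h1 : 2 * p ≤ 3 * m + 1 := by omega
    have h2 := (Nat.cast_le (α := ℝ)).mpr h1
    push_cast at h2
    linarith
  have hlt : gammaP p * p < (m:ℝ)^2 := by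
    nlinarith [sq_nonneg ((p:ℝ) - 10)]
  calc Real.sqrt (gammaP p * p) < Real.sqrt ((m:ℝ)^2) :=
        Real.sqrt_lt_sqrt (by positivity) hlt
    _ = m := Real.sqrt_sq (by positivity)
    _ ≤ GammaPK p 3 := hΓ

lemma case5 : Real.sqrt (gammaP 5 * (5:ℕ)) < GammaPK 5 3 := by
  simp only [Nat.cast_ofNat]
  have hΓ : (103/25 : ℝ) ≤ GammaPK 5 3 := by
    apply GammaSet_lower
    rintro t ⟨ht0, ht1⟩
    have hexp : (((5:ℕ):ℝ) - 1) / ((3:ℕ):ℝ) = (4/3 : ℝ) := by push_cast; norm_num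
    set u : ℝ := t ^ ((1:ℝ)/3) with hu
    have hu0 : 0 < u := Real.rpow_pos_of_pos ht0 _
    have hu1 : u < 1 := Real.rpow_lt_one (le_of_lt ht0) ht1 (by norm_num)
    have he3 : u ^ (3:ℕ) = t := by
      rw [hu, ← Real.rpow_natCast (t ^ ((1:ℝ)/3)) 3, ← Real.rpow_mul (le_of_lt ht0)]
      norm_num
    have he4 : t ^ ((4/3:ℝ)) = u ^ (4:ℕ) := by
      rw [hu, ← Real.rpow_natCast (t ^ ((1:ℝ)/3)) 4, ← Real.rpow_mul (le_of_lt ht0)]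
      norm_num
    simp only [hexp]
    rw [he4, le_div_iff₀ (by positivity), ← he3]
    have expand : (∑ i ∈ Finset.range 5, (u ^ (3:ℕ)) ^ i)
        = 1 + u^3 + u^6 + u^9 + u^12 := by
      simp [Finset.sum_range_succ]; ring
    rw [expand]
    have h1u : (0:ℝ) ≤ 1 - u := by linarith
    nlinarith [mul_nonneg (pow_nonneg hu0.le 0) (pow_nonneg h1u 20),
      mul_nonneg (pow_nonneg hu0.le 1) (pow_nonneg h1u 19),
      mul_nonneg (pow_nonneg hu0.le 2) (pow_nonneg h1u 18),
      mul_nonneg (pow_nonneg hu0.le 3) (pow_nonneg h1u 17),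
      mul_nonneg (pow_nonneg hu0.le 4) (pow_nonneg h1u 16),
      mul_nonneg (pow_nonneg hu0.le 5) (pow_nonneg h1u 15),
      mul_nonneg (pow_nonneg hu0.le 6) (pow_nonneg h1u 14),
      mul_nonneg (pow_nonneg hu0.le 7) (pow_nonneg h1u 13),
      mul_nonneg (pow_nonneg hu0.le 8) (pow_nonneg h1u 12),
      mul_nonneg (pow_nonneg hu0.le 9) (pow_nonneg h1u 11),
      mul_nonneg (pow_nonneg hu0.le 10) (pow_nonneg h1u 10),
      mul_nonneg (pow_nonneg hu0.le 11) (pow_nonneg h1u 9),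
      mul_nonneg (pow_nonneg hu0.le 12) (pow_nonneg h1u 8),
      mul_nonneg (pow_nonneg hu0.le 13) (pow_nonneg h1u 7),
      mul_nonneg (pow_nonneg hu0.le 14) (pow_nonneg h1u 6),
      mul_nonneg (pow_nonneg hu0.le 15) (pow_nonneg h1u 5),
      mul_nonneg (pow_nonneg hu0.le 16) (pow_nonneg h1u 4),
      mul_nonneg (pow_nonneg hu0.le 17) (pow_nonneg h1u 3),
      mul_nonneg (pow_nonneg hu0.le 18) (pow_nonneg h1u 2),
      mul_nonneg (pow_nonneg hu0.le 19) (pow_nonneg h1u 1),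
      mul_nonneg (pow_nonneg hu0.le 20) (pow_nonneg h1u 0)]
  have ht₀ : ((17/20:ℝ)^5) ∈ Set.Ioo (0:ℝ) 1 := by norm_num
  have hγ := gamma_le 5 ht₀
  have he : ((17/20:ℝ)^5) ^ ((((5:ℕ):ℝ) - 1) / ((5:ℕ):ℝ)) = (17/20:ℝ)^4 := by
    rw [show ((((5:ℕ):ℝ)) - 1) / ((5:ℕ):ℝ) = (4/5:ℝ) by push_cast; norm_num]
    rw [← Real.rpow_natCast (17/20:ℝ) 5, ← Real.rpow_mul (by norm_num)]
    rw [show ((5:ℕ):ℝ) * (4/5:ℝ) = ((4:ℕ):ℝ) by push_cast; ring]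
    rw [Real.rpow_natCast]
  rw [he] at hγ
  have hnum : (∑ i ∈ Finset.range 5, ((17/20:ℝ)^5) ^ i) / (17/20:ℝ)^4 * 5 < (103/25:ℝ)^2 := by
    norm_num [Finset.sum_range_succ]
  have hsq : Real.sqrt (gammaP 5 * 5) < 103/25 := by
    rw [Real.sqrt_lt' (by norm_num)]
    nlinarith [gamma_nonneg 5]
  linarith

lemma case7 : Real.sqrt (gammaP 7 * (7:ℕ)) < GammaPK 7 3 := by
  simp only [Nat.cast_ofNat]
  have hΓ : (251/50 : ℝ) ≤ GammaPK 7 3 := by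
    apply GammaSet_lower
    rintro t ⟨ht0, ht1⟩
    have hexp : (((7:ℕ):ℝ) - 1) / ((3:ℕ):ℝ) = ((2:ℕ):ℝ) := by push_cast; norm_num
    simp only [hexp]
    rw [Real.rpow_natCast, le_div_iff₀ (by positivity)]
    have expand : (∑ i ∈ Finset.range 7, t ^ i)
        = 1 + t + t^2 + t^3 + t^4 + t^5 + t^6 := by
      simp [Finset.sum_range_succ]
    rw [expand]
    nlinarith [sq_nonneg (t - 7/10), sq_nonneg (t^2 - t), sq_nonneg (t^3 - t^2),
      sq_nonneg (1 - t), mul_pos ht0 ht0, sq_nonneg (t^2 - 7/10*t),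
      sq_nonneg (t^3 - 7/10*t^2)]
  have ht₀ : ((9/10:ℝ)^7) ∈ Set.Ioo (0:ℝ) 1 := by norm_num
  have hγ := gamma_le 7 ht₀
  have he : ((9/10:ℝ)^7) ^ ((((7:ℕ):ℝ) - 1) / ((7:ℕ):ℝ)) = (9/10:ℝ)^6 := by
    rw [show ((((7:ℕ):ℝ)) - 1) / ((7:ℕ):ℝ) = (6/7:ℝ) by push_cast; norm_num]
    rw [← Real.rpow_natCast (9/10:ℝ) 7, ← Real.rpow_mul (by norm_num)]
    rw [show ((7:ℕ):ℝ) * (6/7:ℝ) = ((6:ℕ):ℝ) by push_cast; ring]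
    rw [Real.rpow_natCast]
  rw [he] at hγ
  have hnum : (∑ i ∈ Finset.range 7, ((9/10:ℝ)^7) ^ i) / (9/10:ℝ)^6 * 7 < (251/50:ℝ)^2 := by
    norm_num [Finset.sum_range_succ]
  have hsq : Real.sqrt (gammaP 7 * 7) < 251/50 := by
    rw [Real.sqrt_lt' (by norm_num)]
    nlinarith [gamma_nonneg 7]
  linarith

/-- For every prime `p ≥ 5`, one has `√(γ_p·p) < Γ_{p,3}`. -/
theorem stmt6 {p : ℕ} (hp : p.Prime) (hp5 : 5 ≤ p) :
    Real.sqrt (gammaP p * p) < GammaPK p 3 := by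
  by_cases h5 : p = 5
  · subst h5; exact case5
  by_cases h7 : p = 7
  · subst h7; exact case7
  have h11 : 11 ≤ p := by
    rcases Nat.lt_or_ge p 11 with h | h
    · interval_cases p <;> first | omega | (exfalso; revert hp; decide)
    · exact h
  exact case_ge11 h11
end

section
/- Let p ≥ 5 be a prime and n a positive integer, and let X_1, …, X_p ⊆ 𝔽_p^n be such that every cycle (x_1, …, x_p) ∈ X_1 × ⋯ × X_p satisfies x_1 = x_2. Then for every j ∈ {3, …, p}, the number of j-extendable pairs (y, z) ∈ X_1 × X_j is at most p^n. -/
/-- Suppose `X_1, …, X_p ⊆ 𝔽_p^n` are such that every cycle (p-tuple summing to zero)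
`(x_1, …, x_p) ∈ X_1 × ⋯ × X_p` satisfies `x_1 = x_2`. Then for every `j ∈ {3, …, p}`,
the number of `j`-extendable pairs `(y,z) ∈ X_1 × X_j` (pairs for which there is a cycle
`(x_1, …, x_p) ∈ X_1 × ⋯ × X_p` with `x_1 = y` and `x_j = z`) is at most `p^n`. -/
theorem stmt8 {p n : ℕ} (hp : p.Prime) (hp5 : 5 ≤ p) (hn : 0 < n)
    (X : Fin p → Set (Fin n → ZMod p))
    (hX : ∀ x : Fin p → (Fin n → ZMod p), (∀ i, x i ∈ X i) → ∑ i, x i = 0 →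
      x ⟨0, by omega⟩ = x ⟨1, by omega⟩)
    (j : Fin p) (hj : 2 ≤ (j : ℕ)) :
    {q : (Fin n → ZMod p) × (Fin n → ZMod p) |
      q.1 ∈ X ⟨0, by omega⟩ ∧ q.2 ∈ X j ∧
      ∃ x : Fin p → (Fin n → ZMod p), (∀ i, x i ∈ X i) ∧ ∑ i, x i = 0 ∧
        x ⟨0, by omega⟩ = q.1 ∧ x j = q.2}.ncard ≤ p ^ n := by
  classical
  have hpos : 0 < p := by omega
  haveI : NeZero p := ⟨by omega⟩
  set i0 : Fin p := ⟨0, by omega⟩ with hi0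
  set i1 : Fin p := ⟨1, by omega⟩ with hi1
  have hji0 : j ≠ i0 := by
    intro h; rw [Fin.ext_iff] at h; rw [hi0] at h; simp only [Fin.val_mk] at h; omega
  have hji1 : j ≠ i1 := by
    intro h; rw [Fin.ext_iff] at h; simp [hi1] at h; omega
  have hi01 : i1 ≠ i0 := by
    intro h; rw [Fin.ext_iff] at h; simp [hi0, hi1] at h
  have htri :
      (Set.univ : Set (Fin n → ZMod p)).ncard = p ^ n := by
    rw [Set.ncard_univ, Nat.card_eq_fintype_card]
    simp [ZMod.card]
  rw [← htri]
  apply Set.ncard_le_ncard_of_injOn (fun q => q.1 + q.2)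
    (fun a _ => Set.mem_univ _) _ Set.finite_univ
  rintro ⟨y, z⟩ ⟨hy, hz, x, hxmem, hxsum, hx0, hxj⟩
    ⟨y', z'⟩ ⟨hy', hz', x', hxmem', hxsum', hx0', hxj'⟩ hsum
  simp only at hsum
  -- build the modified cycle
  set w : Fin p → (Fin n → ZMod p) :=
    Function.update (Function.update x i0 y') j z' with hw
  have hwmem : ∀ i, w i ∈ X i := by
    intro i
    by_cases h1 : i = j
    · subst h1; simpa [hw] using hz'
    · by_cases h2 : i = i0
      · subst h2; simpa [hw, Function.update_of_ne h1, hji0.symm] using hy'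
      · simpa [hw, Function.update_of_ne h1, Function.update_of_ne h2] using hxmem i
  have hwsum : ∑ i, w i = 0 := by
    have hmem0 : i0 ∈ Finset.univ \ {j} := by
      simp [Finset.mem_sdiff, Ne.symm hji0]
    have h1 : ∑ i, w i = z' + ∑ i ∈ Finset.univ \ {j}, Function.update x i0 y' i := by
      rw [hw, Finset.sum_update_of_mem (Finset.mem_univ j)]
    have h2 : ∑ i ∈ Finset.univ \ {j}, Function.update x i0 y' i
        = y' + ∑ i ∈ (Finset.univ \ {j}) \ {i0}, x i := by
      rw [Finset.sum_update_of_mem hmem0]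
    have h3 : ∑ i, x i = x j + (x i0 + ∑ i ∈ (Finset.univ \ {j}) \ {i0}, x i) := by
      simp only [← Finset.erase_eq]
      rw [Finset.add_sum_erase _ x (Finset.mem_erase.2 ⟨Ne.symm hji0, Finset.mem_univ i0⟩),
        Finset.add_sum_erase _ x (Finset.mem_univ j)]
    have h4 : ∑ i ∈ (Finset.univ \ {j}) \ {i0}, x i = - x j - x i0 := by
      rw [h3] at hxsum
      linear_combination hxsum
    rw [h1, h2, h4, hxj, hx0]
    linear_combination hsum.symm
  have hw01 := hX w hwmem hwsum
  have hx01 := hX x hxmem hxsum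
  have hw0 : w i0 = y' := by
    simp [hw, Function.update_of_ne hji0.symm]
  have hw1 : w i1 = x i1 := by
    simp [hw, Function.update_of_ne hji1.symm, Function.update_of_ne hi01]
  have hyy : y' = y := by
    rw [hw0, hw1] at hw01
    rw [hw01, ← hx01, hx0]
  have hzz : z' = z := by
    have := hsum
    rw [hyy] at this
    exact (add_left_cancel this).symm
  simp [hyy, hzz]
end

section
/- Let p ≥ 5 be a prime, n a positive integer, and A ⊆ 𝔽_p^n a nonempty set. Let L = ⌈|A|/(p·P(p))⌉. Then there exist a subset A' ⊆ A and a multiplicity pattern λ = (λ_1, …, λ_k) (a partition of p of length k) such that: (i) there is a collection of L pairwise disjoint cycles (x_1, …, x_p) ∈ A' × ⋯ × A' with multiplicity pattern λ; and (ii) every cycle (x_1, …, x_p) ∈ A' × ⋯ × A' has multiplicity pattern of length at most k. -/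
/-- The multiset of entries of a `p`-tuple of elements of `𝔽_p^n`. -/
def entriesMultiset {p n : ℕ} (x : Fin p → (Fin n → ZMod p)) : Multiset (Fin n → ZMod p) :=
  Multiset.map x Finset.univ.val

/-- The multiplicity pattern of a `p`-tuple `(x_1, …, x_p)`: the multiset recording, for each
of the distinct elements of `𝔽_p^n` occurring among `x_1, …, x_p`, the multiplicity with
which it occurs. Its cardinality is the number of distinct elements among `x_1, …, x_p`,
i.e. the length of the multiplicity pattern. -/
def multPattern {p n : ℕ} (x : Fin p → (Fin n → ZMod p)) : Multiset ℕ :=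
  (entriesMultiset x).toFinset.val.map fun g => (entriesMultiset x).count g

set_option linter.unusedSectionVars false
set_option linter.unusedVariables false

namespace Stmt12Aux

variable {p n : ℕ}

lemma multPattern_sum (x : Fin p → (Fin n → ZMod p)) : (multPattern x).sum = p := by
  have h : (multPattern x).sum = ∑ g ∈ (entriesMultiset x).toFinset, (entriesMultiset x).count g := rfl
  rw [h, Multiset.toFinset_sum_count_eq]
  simp [entriesMultiset]

lemma multPattern_pos (x : Fin p → (Fin n → ZMod p)) {i : ℕ} (hi : i ∈ multPattern x) : 0 < i := by
  obtain ⟨g, hg, rfl⟩ := Multiset.mem_map.mp hi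
  exact Multiset.count_pos.mpr (Multiset.mem_toFinset.mp hg)

/-- The partition of `p` given by a `p`-tuple's multiplicity pattern. -/
def toPart (x : Fin p → (Fin n → ZMod p)) : Nat.Partition p :=
  ⟨multPattern x, fun hi => multPattern_pos x hi, multPattern_sum x⟩

def Cyc [NeZero p] (S : Finset (Fin n → ZMod p)) : Finset (Fin p → (Fin n → ZMod p)) :=
  Finset.univ.filter fun x => (∀ i, x i ∈ S) ∧ ∑ i, x i = 0

lemma mem_Cyc [NeZero p] {S : Finset (Fin n → ZMod p)} {x} :
    x ∈ Cyc S ↔ (∀ i, x i ∈ S) ∧ ∑ i, x i = 0 := by simp [Cyc]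

lemma Cyc_mono [NeZero p] {S T : Finset (Fin n → ZMod p)} (h : S ⊆ T) : Cyc S ⊆ Cyc T := by
  intro x hx
  rw [mem_Cyc] at hx ⊢
  exact ⟨fun i => h (hx.1 i), hx.2⟩

lemma const_mem_Cyc [NeZero p] {S : Finset (Fin n → ZMod p)} {a} (ha : a ∈ S) :
    (fun _ : Fin p => a) ∈ Cyc S := by
  rw [mem_Cyc]
  refine ⟨fun _ => ha, ?_⟩
  rw [Finset.sum_const, Finset.card_univ, Fintype.card_fin]
  funext j
  simp [nsmul_eq_mul, ZMod.natCast_self]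

lemma Cyc_nonempty [NeZero p] {S : Finset (Fin n → ZMod p)} (h : S.Nonempty) :
    (Cyc S).Nonempty := by
  obtain ⟨a, ha⟩ := h
  exact ⟨_, const_mem_Cyc ha⟩

/-- length of the multiplicity pattern -/
def len (x : Fin p → (Fin n → ZMod p)) : ℕ := Multiset.card (multPattern x)

/-- a cycle in `S` of maximal pattern length -/
noncomputable def pick [NeZero p] (S : Finset (Fin n → ZMod p)) : Fin p → (Fin n → ZMod p) :=
  if h : (Cyc S).Nonempty then (Finset.exists_mem_eq_sup _ h len).choose else fun _ _ => 0

lemma pick_mem [NeZero p] {S : Finset (Fin n → ZMod p)} (h : S.Nonempty) : pick S ∈ Cyc S := by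
  rw [pick, dif_pos (Cyc_nonempty h)]
  exact (Finset.exists_mem_eq_sup _ (Cyc_nonempty h) len).choose_spec.1

lemma pick_max [NeZero p] {S : Finset (Fin n → ZMod p)} (h : S.Nonempty) :
    ∀ y ∈ Cyc S, len y ≤ len (pick S) := by
  intro y hy
  rw [pick, dif_pos (Cyc_nonempty h)]
  rw [← (Finset.exists_mem_eq_sup _ (Cyc_nonempty h) len).choose_spec.2]
  exact Finset.le_sup hy

/-- the set of entries of a tuple -/
def ent (x : Fin p → (Fin n → ZMod p)) : Finset (Fin n → ZMod p) := Finset.image x Finset.univ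

lemma card_ent_le (x : Fin p → (Fin n → ZMod p)) : (ent x).card ≤ p := by
  calc (ent x).card ≤ (Finset.univ : Finset (Fin p)).card := Finset.card_image_le
  _ = p := by simp

lemma sdiff_ent_lt [NeZero p] {S : Finset (Fin n → ZMod p)} (h : S.Nonempty) :
    (S \ ent (pick S)).card < S.card := by
  have hp : 0 < p := Nat.pos_of_ne_zero (NeZero.ne p)
  have h0 : pick S ⟨0, hp⟩ ∈ S := (mem_Cyc.mp (pick_mem h)).1 _
  have he : pick S ⟨0, hp⟩ ∈ ent (pick S) := Finset.mem_image_of_mem _ (Finset.mem_univ _)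
  refine Finset.card_lt_card ?_
  refine Finset.ssubset_iff_of_subset (Finset.sdiff_subset) |>.mpr ?_
  exact ⟨_, h0, fun hc => (Finset.mem_sdiff.mp hc).2 he⟩

noncomputable def greedy [NeZero p] (S : Finset (Fin n → ZMod p)) :
    List (Fin p → (Fin n → ZMod p)) :=
  if h : S.Nonempty then pick S :: greedy (S \ ent (pick S)) else []
termination_by S.card
decreasing_by exact sdiff_ent_lt h

lemma greedy_pos [NeZero p] (S : Finset (Fin n → ZMod p)) (h : S.Nonempty) :
    greedy S = pick S :: greedy (S \ ent (pick S)) := by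
  rw [greedy, dif_pos h]

lemma greedy_neg [NeZero p] (S : Finset (Fin n → ZMod p)) (h : ¬ S.Nonempty) : greedy S = [] := by
  rw [greedy, dif_neg h]

lemma greedy_card [NeZero p] (S : Finset (Fin n → ZMod p)) :
    S.card ≤ p * (greedy S).length := by
  induction S using Finset.strongInductionOn with
  | _ S ih =>
    by_cases h : S.Nonempty
    · rw [greedy_pos S h]
      have hsub : S \ ent (pick S) ⊂ S := by
        refine Finset.ssubset_iff_of_subset (Finset.sdiff_subset) |>.mpr ?_
        have hp : 0 < p := Nat.pos_of_ne_zero (NeZero.ne p)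
        have h0 : pick S ⟨0, hp⟩ ∈ S := (mem_Cyc.mp (pick_mem h)).1 _
        have he : pick S ⟨0, hp⟩ ∈ ent (pick S) := Finset.mem_image_of_mem _ (Finset.mem_univ _)
        exact ⟨_, h0, fun hc => (Finset.mem_sdiff.mp hc).2 he⟩
      have := ih _ hsub
      have hcard : S.card ≤ (S \ ent (pick S)).card + p := by
        have h1 : S.card ≤ (S \ ent (pick S)).card + (ent (pick S)).card :=
          Finset.card_le_card_sdiff_add_card
        have h2 := card_ent_le (p := p) (n := n) (pick S)
        omega
      calc S.card ≤ (S \ ent (pick S)).card + p := hcard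
      _ ≤ p * (greedy (S \ ent (pick S))).length + p := by omega
      _ = p * ((greedy (S \ ent (pick S))).length + 1) := by ring
      _ = p * (pick S :: greedy (S \ ent (pick S))).length := by simp
    · simp [Finset.not_nonempty_iff_eq_empty.mp h]

lemma greedy_mem [NeZero p] (S : Finset (Fin n → ZMod p)) :
    ∀ x ∈ greedy S, x ∈ Cyc S := by
  induction S using Finset.strongInductionOn with
  | _ S ih =>
    by_cases h : S.Nonempty
    · rw [greedy_pos S h]
      intro x hx
      rcases List.mem_cons.mp hx with rfl | hx
      · exact pick_mem h
      · have hsub : S \ ent (pick S) ⊂ S :=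
          Finset.ssubset_iff_of_subset (Finset.sdiff_subset) |>.mpr (by
            have hp : 0 < p := Nat.pos_of_ne_zero (NeZero.ne p)
            exact ⟨_, (mem_Cyc.mp (pick_mem h)).1 ⟨0, hp⟩,
              fun hc => (Finset.mem_sdiff.mp hc).2
                (Finset.mem_image_of_mem _ (Finset.mem_univ _))⟩)
        exact Cyc_mono Finset.sdiff_subset (ih _ hsub x hx)
    · rw [greedy_neg S h]; intro x hx; simp at hx

lemma greedy_pairwise [NeZero p] (S : Finset (Fin n → ZMod p)) :
    (greedy S).Pairwise (fun x y => ∀ i i', x i ≠ y i') := by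
  induction S using Finset.strongInductionOn with
  | _ S ih =>
    by_cases h : S.Nonempty
    · rw [greedy_pos S h]
      have hsub : S \ ent (pick S) ⊂ S :=
        Finset.ssubset_iff_of_subset (Finset.sdiff_subset) |>.mpr (by
          have hp : 0 < p := Nat.pos_of_ne_zero (NeZero.ne p)
          exact ⟨_, (mem_Cyc.mp (pick_mem h)).1 ⟨0, hp⟩,
            fun hc => (Finset.mem_sdiff.mp hc).2
              (Finset.mem_image_of_mem _ (Finset.mem_univ _))⟩)
      refine List.Pairwise.cons ?_ (ih _ hsub)
      intro y hy i i' hne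
      have hyC := greedy_mem _ y hy
      have : y i' ∈ S \ ent (pick S) := (mem_Cyc.mp hyC).1 i'
      have : y i' ∉ ent (pick S) := (Finset.mem_sdiff.mp this).2
      exact this (hne ▸ Finset.mem_image_of_mem _ (Finset.mem_univ _))
    · rw [greedy_neg S h]; exact List.Pairwise.nil

lemma greedy_drop [NeZero p] :
    ∀ (k : ℕ) (S : Finset (Fin n → ZMod p)),
      ∃ T, T ⊆ S ∧ (greedy S).drop k = greedy T := by
  intro k
  induction k with
  | zero => intro S; exact ⟨S, Finset.Subset.refl _, rfl⟩
  | succ k ih =>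
    intro S
    by_cases h : S.Nonempty
    · obtain ⟨T, hT, hdrop⟩ := ih (S \ ent (pick S))
      refine ⟨T, hT.trans Finset.sdiff_subset, ?_⟩
      rw [greedy_pos S h]
      simpa using hdrop
    · exact ⟨S, Finset.Subset.refl _, by rw [greedy_neg S h]; simp [greedy_neg S h]⟩

end Stmt12Aux

open Stmt12Aux in
/-- Let `p ≥ 5` be prime, `n ≥ 1`, `A ⊆ 𝔽_p^n` nonempty, and `L = ⌈|A|/(p·P(p))⌉` where
`P(p)` is the number of partitions of `p`. Then there are a subset `A' ⊆ A` and a partition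
`λ` of `p` such that: (i) there is a collection of `L` pairwise disjoint cycles in
`A' × ⋯ × A'` with multiplicity pattern `λ`; and (ii) every cycle in `A' × ⋯ × A'` has
multiplicity pattern of length at most the length `k` of `λ`. -/
theorem stmt12 {p n : ℕ} (hp : p.Prime) (hp5 : 5 ≤ p) (hn : 0 < n)
    (A : Finset (Fin n → ZMod p)) (hA : A.Nonempty)
    (L : ℕ) (hL : L = ⌈(A.card : ℚ) / ((p : ℚ) * (Fintype.card (Nat.Partition p) : ℚ))⌉₊) :
    ∃ (A' : Finset (Fin n → ZMod p)) (lam : Nat.Partition p),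
      A' ⊆ A ∧
      (∃ c : Fin L → Fin p → (Fin n → ZMod p),
        (∀ l, (∀ i, c l i ∈ A') ∧ ∑ i, c l i = 0 ∧ multPattern (c l) = lam.parts) ∧
        (∀ l l', l ≠ l' → ∀ i i', c l i ≠ c l' i')) ∧
      (∀ x : Fin p → (Fin n → ZMod p), (∀ i, x i ∈ A') → ∑ i, x i = 0 →
        Multiset.card (multPattern x) ≤ Multiset.card lam.parts) := by
  haveI : NeZero p := ⟨hp.ne_zero⟩
  have hppos : 0 < p := hp.pos
  set P := Fintype.card (Nat.Partition p) with hP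
  have hPpos : 0 < P := Fintype.card_pos
  set lst := greedy A with hlst
  set t := lst.length with ht
  have hpt : A.card ≤ p * t := greedy_card A
  -- L ≥ 1
  have hL1 : 1 ≤ L := by
    rw [hL]
    refine Nat.one_le_ceil_iff.mpr ?_
    have hAc : (0:ℚ) < (A.card : ℚ) := by
      exact_mod_cast Finset.card_pos.mpr hA
    positivity
  -- key inequality
  have hkey : P * (L - 1) < t := by
    have h1 : ((L - 1 : ℕ) : ℚ) < (A.card : ℚ) / ((p : ℚ) * (P : ℚ)) := by
      rw [← Nat.lt_ceil, ← hL]; omega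
    have hden : (0:ℚ) < (p : ℚ) * (P : ℚ) := by positivity
    have h2 : ((L - 1 : ℕ) : ℚ) * ((p : ℚ) * (P : ℚ)) < (A.card : ℚ) :=
      (lt_div_iff₀ hden).mp h1
    have h3 : (L - 1) * (p * P) < A.card := by exact_mod_cast h2
    have h4 : p * (P * (L - 1)) < p * t := by
      calc p * (P * (L - 1)) = (L - 1) * (p * P) := by ring
      _ < A.card := h3
      _ ≤ p * t := hpt
    exact Nat.lt_of_mul_lt_mul_left h4
  -- pigeonhole
  have hmaps : ∀ i ∈ (Finset.univ : Finset (Fin t)),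
      toPart (lst.get i) ∈ (Finset.univ : Finset (Nat.Partition p)) := fun _ _ => Finset.mem_univ _
  have hcard : (Finset.univ : Finset (Nat.Partition p)).card * (L - 1)
      < (Finset.univ : Finset (Fin t)).card := by
    simpa [Finset.card_univ] using hkey
  obtain ⟨lam, -, hlam⟩ :=
    Finset.exists_lt_card_fiber_of_mul_lt_card_of_maps_to hmaps hcard
  set F := Finset.univ.filter (fun i : Fin t => toPart (lst.get i) = lam) with hF
  have hFL : L ≤ F.card := by omega
  have hFne : F.Nonempty := Finset.card_pos.mp (by omega)
  set i₀ := F.min' hFne with hi₀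
  have hi₀F : i₀ ∈ F := F.min'_mem hFne
  have hi₀lam : toPart (lst.get i₀) = lam := (Finset.mem_filter.mp hi₀F).2
  obtain ⟨G, hGF, hGcard⟩ := Finset.exists_subset_card_eq hFL
  set e := G.equivFinOfCardEq hGcard with he
  set idx : Fin L → Fin t := fun l => ((e.symm l : G) : Fin t) with hidx
  have hidx_inj : Function.Injective idx := by
    intro a b hab
    apply e.symm.injective
    exact Subtype.ext hab
  have hidxF : ∀ l, idx l ∈ F := fun l => hGF (e.symm l).2
  have hidx_ge : ∀ l, (i₀ : ℕ) ≤ (idx l : ℕ) := fun l => F.min'_le _ (hidxF l)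
  obtain ⟨T, hTA, hdrop⟩ := greedy_drop (p := p) (n := n) (i₀ : ℕ) A
  have hTne : T.Nonempty := by
    by_contra hc
    rw [greedy_neg T hc] at hdrop
    have : (lst.drop (i₀ : ℕ)).length = 0 := by rw [hdrop]; rfl
    rw [List.length_drop] at this
    omega
  have hgT : greedy T = pick T :: greedy (T \ ent (pick T)) := greedy_pos T hTne
  -- identify entries
  have hget : ∀ (j : Fin t), (i₀ : ℕ) ≤ (j : ℕ) → lst.get j ∈ greedy T := by
    intro j hj
    have h1 : (j : ℕ) - (i₀ : ℕ) < (lst.drop (i₀ : ℕ)).length := by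
      rw [List.length_drop]; omega
    have h2 : (lst.drop (i₀ : ℕ))[(j : ℕ) - (i₀ : ℕ)] = lst.get j := by
      rw [List.getElem_drop]
      congr 1
      omega
    rw [← hdrop]
    rw [← h2]
    exact List.getElem_mem h1
  have hhead : lst.get i₀ = pick T := by
    have h1 : (0 : ℕ) < (lst.drop (i₀ : ℕ)).length := by
      rw [List.length_drop]; omega
    have h2 : (lst.drop (i₀ : ℕ))[0] = lst.get i₀ := by
      rw [List.getElem_drop]
      simp [List.get_eq_getElem]
    have h3 : lst.drop (i₀ : ℕ) = pick T :: greedy (T \ ent (pick T)) := by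
      rw [hlst, hdrop, hgT]
    calc lst.get i₀ = (lst.drop (i₀ : ℕ))[0] := h2.symm
    _ = (pick T :: greedy (T \ ent (pick T)))[0]'(by simp) := List.getElem_of_eq h3 _
    _ = pick T := rfl
  refine ⟨T, lam, hTA, ⟨fun l => lst.get (idx l), ?_, ?_⟩, ?_⟩
  · intro l
    have hmem : lst.get (idx l) ∈ greedy T := hget _ (hidx_ge l)
    have hcyc := greedy_mem T _ hmem
    rw [mem_Cyc] at hcyc
    have hpat : toPart (lst.get (idx l)) = lam := (Finset.mem_filter.mp (hidxF l)).2
    exact ⟨hcyc.1, hcyc.2, congrArg Nat.Partition.parts hpat⟩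
  · intro l l' hne i i'
    have hij : idx l ≠ idx l' := fun h => hne (hidx_inj h)
    have hpw := List.pairwise_iff_get.mp (greedy_pairwise A)
    rcases lt_or_gt_of_ne hij with h | h
    · exact hpw _ _ h i i'
    · exact (hpw _ _ h i' i).symm
  · intro x hx hsum
    have hxC : x ∈ Cyc T := mem_Cyc.mpr ⟨hx, hsum⟩
    have := pick_max hTne x hxC
    rw [len, len] at this
    calc Multiset.card (multPattern x) ≤ Multiset.card (multPattern (pick T)) := this
    _ = Multiset.card lam.parts := by
        rw [← hhead, ← hi₀lam]
        rfl
end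

section
/- Let p ≥ 5 be a prime and n a positive even integer. Then there exists a collection of p-tuples (x_{1,i}, x_{2,i}, …, x_{p,i})_{i=1}^L of elements of 𝔽_p^n with L = p^{n/2} such that: for each j ∈ {1, …, p} the elements x_{j,1}, …, x_{j,L} are pairwise distinct; x_{1,i} + x_{2,i} + ⋯ + x_{p,i} = 0 for every i ∈ {1, …, L}; and there are no pairwise distinct indices i_1, …, i_p ∈ {1, …, L} with x_{1,i_1} + x_{2,i_2} + ⋯ + x_{p,i_p} = 0. -/
theorem aux16 (p m : ℕ) (hp : 1 < p) :
    ∃ x : Fin p → Fin (p ^ m) → (Fin (m + m) → ZMod p),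
      (∀ j, Function.Injective (x j)) ∧
      (∀ i, ∑ j, x j i = 0) ∧
      ¬ ∃ i : Fin p → Fin (p ^ m), Function.Injective i ∧ ∑ j, x j (i j) = 0 := by
  haveI : NeZero p := ⟨by omega⟩
  set E : Fin (p ^ m) → Fin m → ZMod p :=
    fun i k => ((finFunctionFinEquiv.symm i k : ℕ) : ZMod p) with hE
  have hEinj : Function.Injective E := by
    intro i i' h
    apply finFunctionFinEquiv.symm.injective
    funext k
    have h2 : ((finFunctionFinEquiv.symm i k : ℕ) : ZMod p)
        = ((finFunctionFinEquiv.symm i' k : ℕ) : ZMod p) := congrFun h k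
    have h3 := congrArg ZMod.val h2
    rw [ZMod.val_cast_of_lt (Fin.is_lt _), ZMod.val_cast_of_lt (Fin.is_lt _)] at h3
    exact Fin.ext h3
  set j0 : Fin p := ⟨0, by omega⟩ with hj0
  set j1 : Fin p := ⟨1, by omega⟩ with hj1
  set a : Fin p → ZMod p :=
    fun j => (if j = j0 then 1 else 0) - (if j = j1 then 1 else 0) with ha
  have hasum : ∑ j : Fin p, a j = 0 := by
    rw [ha]
    rw [Finset.sum_sub_distrib, Finset.sum_ite_eq' Finset.univ j0 (fun _ => (1 : ZMod p)),
      Finset.sum_ite_eq' Finset.univ j1 (fun _ => (1 : ZMod p))]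
    simp
  refine ⟨fun j i => Fin.append (fun k => a j * E i k) (fun k => E i k), ?_, ?_, ?_⟩
  · intro j i i' h
    refine hEinj (funext fun k => ?_)
    have h2 := congrFun h (Fin.natAdd m k)
    simp only [Fin.append_right] at h2
    exact h2
  · intro i
    funext k
    rw [Finset.sum_apply]
    refine Fin.addCases (fun k0 => ?_) (fun k0 => ?_) k
    · have : ∀ j : Fin p, Fin.append (fun k => a j * E i k) (fun k => E i k)
          (Fin.castAdd m k0) = a j * E i k0 := fun j => Fin.append_left _ _ _
      rw [Finset.sum_congr rfl (fun j _ => this j), ← Finset.sum_mul, hasum, zero_mul]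
      rfl
    · have : ∀ j : Fin p, Fin.append (fun k => a j * E i k) (fun k => E i k)
          (Fin.natAdd m k0) = E i k0 := fun j => Fin.append_right _ _ _
      rw [Finset.sum_congr rfl (fun j _ => this j), Finset.sum_const, Finset.card_univ,
        Fintype.card_fin, nsmul_eq_mul, ZMod.natCast_self, zero_mul]
      rfl
  · rintro ⟨i, hi, hsum⟩
    have key : E (i j0) = E (i j1) := by
      funext k
      have h2 := congrFun hsum (Fin.castAdd m k)
      rw [Finset.sum_apply] at h2
      have h3 : ∀ j : Fin p, Fin.append (fun k' => a j * E (i j) k') (fun k' => E (i j) k')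
          (Fin.castAdd m k) = a j * E (i j) k := fun j => Fin.append_left _ _ _
      rw [Finset.sum_congr rfl (fun j _ => h3 j)] at h2
      simp only [ha, sub_mul, ite_mul, one_mul, zero_mul, Finset.sum_sub_distrib,
        Finset.sum_ite_eq' Finset.univ, Finset.mem_univ, if_true, Pi.zero_apply] at h2
      exact sub_eq_zero.mp h2
    have : j0 = j1 := hi (hEinj key)
    simp [hj0, hj1, Fin.ext_iff] at this
  
/-- Let `p ≥ 5` be prime and `n` a positive even integer. Then there is a collection of
`p`-tuples `(x_{1,i}, …, x_{p,i})_{i=1}^L` of elements of `𝔽_p^n` with `L = p^{n/2}` such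
that: for each `j` the elements `x_{j,1}, …, x_{j,L}` are pairwise distinct;
`x_{1,i} + ⋯ + x_{p,i} = 0` for every `i`; and there are no pairwise distinct indices
`i_1, …, i_p` with `x_{1,i_1} + ⋯ + x_{p,i_p} = 0`. -/
theorem stmt16 {p n : ℕ} (hp : p.Prime) (hp5 : 5 ≤ p) (hn : 0 < n) (hne : Even n) :
    ∃ x : Fin p → Fin (p ^ (n / 2)) → (Fin n → ZMod p),
      (∀ j, Function.Injective (x j)) ∧
      (∀ i, ∑ j, x j i = 0) ∧
      ¬ ∃ i : Fin p → Fin (p ^ (n / 2)), Function.Injective i ∧ ∑ j, x j (i j) = 0 := by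
  obtain ⟨r, hr⟩ := hne
  subst hr
  have h2 : (r + r) / 2 = r := by omega
  rw [h2]
  exact aux16 p r hp.one_lt
end
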